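/- In an MV-algebra, for ideals I₁, ..., Iₙ₋₁, Iₙ, the intersection over i < n of the ideals (Iᵢ, Iₙ) equals the ideal ((⋂ᵢ<ₙ Iᵢ), Iₙ), i.e., generating an ideal with Iₙ commutes with finite intersections: ⋂ᵢ(Iᵢ, Iₙ) = (⋂ᵢ Iᵢ, Iₙ). -/

import Mathlib

/-- An MV-algebra. -/
class MV (A : Type*) where
  add : A → A → A
  neg : A → A
  zero : A
  add_assoc : ∀ a b c, add (add a b) c = add a (add b c)
  add_comm : ∀ a b, add a b = add b a
  add_zero : ∀ a, add a zero = a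
  neg_neg : ∀ a, neg (neg a) = a
  add_neg_zero : ∀ a, add a (neg zero) = neg zero
  lukasiewicz : ∀ a b, add (neg (add (neg a) b)) b = add (neg (add (neg b) a)) a

namespace MV
variable {A : Type*} [MV A]
/-- a ⊖ b := ¬(¬a ⊕ b) -/
def sub (a b : A) : A := neg (add (neg a) b)
/-- a ∨ b := (a ⊖ b) ⊕ b -/
def sup (a b : A) : A := add (sub a b) b
/-- a ∧ b := ¬(¬a ∨ ¬b) -/
def inf (a b : A) : A := neg (sup (neg a) (neg b))
/-- a ≤ b iff a ⊖ b = 0 -/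
def le (a b : A) : Prop := sub a b = zero
/-- Ideal: contains 0, closed under ⊕, downward closed. -/
def IsIdeal (I : Set A) : Prop :=
  zero ∈ I ∧ (∀ a b : A, a ∈ I → b ∈ I → add a b ∈ I) ∧
    (∀ a b : A, b ∈ I → le a b → a ∈ I)
/-- Congruence modulo an ideal: x ≡ y (mod I) iff x ⊖ y ∈ I and y ⊖ x ∈ I. -/
def cong (I : Set A) (x y : A) : Prop := sub x y ∈ I ∧ sub y x ∈ I
/-- The ideal (I, J) generated by I ∪ J: elements bounded by c ⊕ d, c ∈ I, d ∈ J. -/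
def gen (I J : Set A) : Set A := {x | ∃ c ∈ I, ∃ d ∈ J, le x (add c d)}
end MV

namespace MVAux
open MV

variable {A : Type*} [MV A]

lemma add_left_comm (a b c : A) : add a (add b c) = add b (add a c) := by
  rw [← MV.add_assoc, MV.add_comm a b, MV.add_assoc]

lemma zero_add (a : A) : add zero a = a := by rw [MV.add_comm, MV.add_zero]

lemma one_add (a : A) : add (neg zero) a = neg zero := by rw [MV.add_comm, add_neg_zero]

lemma le_iff {a b : A} : le a b ↔ add (neg a) b = neg zero := by
  constructor
  · intro h
    have := congrArg neg h
    simp only [MV.le, MV.sub] at this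
    rwa [MV.neg_neg] at this
  · intro h
    simp only [MV.le, MV.sub]; rw [h, MV.neg_neg]

lemma em (a : A) : add (neg a) a = neg zero := by
  have h := lukasiewicz a (neg zero)
  rw [add_neg_zero, MV.neg_neg, zero_add] at h
  exact h.symm

lemma le_refl (a : A) : le a a := le_iff.2 (em a)

lemma le_self_add (a b : A) : le a (add a b) := by
  rw [le_iff, ← MV.add_assoc, em, one_add]

lemma resid {a b c : A} : le (sub a b) c ↔ le a (add b c) := by
  simp only [MV.le, MV.sub, MV.neg_neg, MV.add_assoc]

lemma sub_add_cancel {a b : A} (h : le a b) : add (sub b a) a = b := by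
  rw [MV.sub, lukasiewicz]
  simp only [MV.le, MV.sub] at h
  rw [h, zero_add]

lemma le_trans {a b c : A} (h1 : le a b) (h2 : le b c) : le a c := by
  rw [le_iff] at h1 ⊢
  rw [← sub_add_cancel h2, add_left_comm, h1, add_neg_zero]

lemma add_le_add_left {a b : A} (c : A) (h : le a b) : le (add c a) (add c b) := by
  rw [← sub_add_cancel h]
  have : add c (add (sub b a) a) = add (add c a) (sub b a) := by
    rw [MV.add_comm (sub b a) a, ← MV.add_assoc]
  rw [this]
  exact le_self_add _ _

lemma sub_le_sub_right {a b c : A} (h : le b c) : le (sub a c) (sub a b) := by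
  rw [resid]
  have h1 : le a (add b (sub a b)) := resid.1 (le_refl _)
  have h2 : le (add b (sub a b)) (add c (sub a b)) := by
    rw [MV.add_comm b _, MV.add_comm c _]
    exact add_le_add_left _ h
  exact le_trans h1 h2

lemma foldr_mem {J : Set A} (hJ : IsIdeal J) :
    ∀ l : List A, (∀ a ∈ l, a ∈ J) → l.foldr add zero ∈ J := by
  intro l
  induction l with
  | nil => intro _; exact hJ.1
  | cons hd tl ih =>
    intro h
    exact hJ.2.1 _ _ (h hd (List.mem_cons_self))
      (ih fun a ha => h a (List.mem_cons_of_mem _ ha))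

lemma le_foldr : ∀ (l : List A) (a : A), a ∈ l → le a (l.foldr add zero) := by
  intro l
  induction l with
  | nil => intro a ha; simp at ha
  | cons hd tl ih =>
    intro a ha
    rcases List.mem_cons.1 ha with h | h
    · subst h; exact le_self_add _ _
    · have h1 := ih a h
      have h2 : le (tl.foldr add zero) (add hd (tl.foldr add zero)) := by
        rw [MV.add_comm]; exact le_self_add _ _
      exact le_trans h1 h2

end MVAux

open MV in
theorem stmt6 {A : Type*} [MV A] {n : ℕ} {I : Fin n → Set A} {J : Set A}
    (hI : ∀ i, IsIdeal (I i)) (hJ : IsIdeal J) :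
    (⋂ i, gen (I i) J) = gen (⋂ i, I i) J := by
  ext x
  simp only [Set.mem_iInter]
  constructor
  · intro h
    choose c hc d hd hle using h
    set dd : A := (List.ofFn d).foldr add zero with hdd
    have hddJ : dd ∈ J := MVAux.foldr_mem hJ _ (by
      intro a ha
      obtain ⟨i, rfl⟩ := List.mem_ofFn.1 ha
      exact hd i)
    refine ⟨sub x dd, ?_, dd, hddJ, ?_⟩
    · apply Set.mem_iInter.2
      intro i
      have h1 : le (d i) dd := MVAux.le_foldr _ _ ((List.mem_ofFn.2 ⟨i, rfl⟩))
      have h2 : le (sub x dd) (sub x (d i)) := MVAux.sub_le_sub_right h1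
      have h3 : le (sub x (d i)) (c i) := by
        rw [MVAux.resid, MV.add_comm]
        exact hle i
      exact (hI i).2.2 _ _ (hc i) (MVAux.le_trans h2 h3)
    · rw [MV.add_comm]
      exact MVAux.resid.1 (MVAux.le_refl _)
  · rintro ⟨c, hc, d, hd, hle⟩ i
    exact ⟨c, Set.mem_iInter.1 hc i, d, hd, hle⟩
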